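/- Let R>0 and Γ>0. For every fixed h ∈ ℝ, the rescaled energy Ê(h,r,α) tends to 2ΓR²/π as r → 0⁺, uniformly with respect to α ∈ ℝ; in particular the limit does not depend on the energy level h, so the total collision manifold is the same boundary for every energy level. -/

import Mathlib

open Real

/-- `φ₁(r) := r·e^{−1/r²}`. -/
noncomputable def phi1 (r : ℝ) : ℝ := r * Real.exp (-1 / r ^ 2)

/-- `c(r,α) := 8R² + φ₁(r)² + 4R·φ₁(r)·sin α`. -/
noncomputable def cmg (R r α : ℝ) : ℝ :=
  8 * R ^ 2 + phi1 r ^ 2 + 4 * R * phi1 r * Real.sin α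

/-- The function `l` in McGehee coordinates. -/
noncomputable def lmg (R r α : ℝ) : ℝ := 8 * R ^ 2 / (cmg R r α) ^ 2

/-- The rescaled energy
`Ê(h,r,α) := (r²/l(r,α))·[h − (Γ/(8π))·log(2R²r²e^{−2/r²}) + (Γ/(8π))·log(c(r,α))]`. -/
noncomputable def Ehat (R Γ h r α : ℝ) : ℝ :=
  r ^ 2 / lmg R r α *
    (h - Γ / (8 * π) * Real.log (2 * R ^ 2 * r ^ 2 * Real.exp (-2 / r ^ 2)) +
      Γ / (8 * π) * Real.log (cmg R r α))

open Real Filter Topology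

noncomputable def Dfun (R Γ h r : ℝ) : ℝ :=
  r ^ 2 * |h| + Γ / (8 * π) * |r ^ 2 * Real.log (2 * R ^ 2 * r ^ 2)| +
    Γ / (8 * π) * (r ^ 2 * (|Real.log (4 * R ^ 2)| + |Real.log (13 * R ^ 2)|))

lemma tendsto_sq_log : Tendsto (fun r : ℝ => r ^ 2 * Real.log r) (𝓝[>] 0) (𝓝 0) := by
  have h := tendsto_log_mul_rpow_nhdsGT_zero (r := 2) two_pos
  refine h.congr' ?_
  filter_upwards [self_mem_nhdsWithin] with r hr
  rw [show (2:ℝ) = ((2:ℕ):ℝ) by norm_num, Real.rpow_natCast]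
  ring

lemma tendsto_sq : Tendsto (fun r : ℝ => r ^ 2) (𝓝[>] (0:ℝ)) (𝓝 0) := by
  have : Tendsto (fun r : ℝ => r ^ 2) (𝓝 (0:ℝ)) (𝓝 0) := by
    simpa using (continuous_pow 2).tendsto (0 : ℝ)
  exact this.mono_left nhdsWithin_le_nhds

lemma tendsto_sq_log2 (R : ℝ) (hR : 0 < R) :
    Tendsto (fun r : ℝ => r ^ 2 * Real.log (2 * R ^ 2 * r ^ 2)) (𝓝[>] 0) (𝓝 0) := by
  have h1 : Tendsto (fun r : ℝ => r ^ 2 * Real.log (2 * R ^ 2) + 2 * (r ^ 2 * Real.log r))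
      (𝓝[>] (0:ℝ)) (𝓝 0) := by
    have := (tendsto_sq.mul_const (Real.log (2 * R ^ 2))).add
      ((tendsto_sq_log).const_mul 2)
    simpa using this
  refine h1.congr' ?_
  filter_upwards [self_mem_nhdsWithin] with r hr
  have hr0 : (0:ℝ) < r := hr
  have hl : Real.log (2 * R ^ 2 * r ^ 2) = Real.log (2 * R ^ 2) + 2 * Real.log r := by
    rw [Real.log_mul (by positivity) (by positivity), Real.log_pow]
    push_cast
    ring
  rw [hl]
  ring

lemma tendsto_Dfun (R Γ h : ℝ) (hR : 0 < R) :
    Tendsto (Dfun R Γ h) (𝓝[>] 0) (𝓝 0) := by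
  have h1 := tendsto_sq.mul_const |h|
  have h2 := ((tendsto_sq_log2 R hR).abs).const_mul (Γ / (8 * π))
  have h3 := (tendsto_sq.mul_const (|Real.log (4 * R ^ 2)| + |Real.log (13 * R ^ 2)|)).const_mul
    (Γ / (8 * π))
  have := (h1.add h2).add h3
  simp only [zero_mul, mul_zero, abs_zero, add_zero] at this
  exact this

lemma key (R Γ h : ℝ) (hR : 0 < R) (hΓ : 0 < Γ) (r : ℝ) (hr : 0 < r) (hrR : r ≤ R) (α : ℝ) :
    |Ehat R Γ h r α - 2 * Γ * R ^ 2 / π| ≤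
      21 / 8 * r * (r + 4 * R) * (Γ / (4 * π) + Dfun R Γ h r) + 8 * R ^ 2 * Dfun R Γ h r := by
  have hπ : (0:ℝ) < π := Real.pi_pos
  set u := phi1 r with hu
  have hu0 : 0 < u := mul_pos hr (Real.exp_pos _)
  have hur : u ≤ r := by
    have : Real.exp (-1 / r ^ 2) ≤ 1 := by
      apply Real.exp_le_one_iff.2
      rw [neg_div]
      exact neg_nonpos_of_nonneg (by positivity)
    calc u = r * Real.exp (-1 / r ^ 2) := rfl
      _ ≤ r * 1 := by nlinarith
      _ = r := mul_one r
  have huR : u ≤ R := hur.trans hrR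
  set c := cmg R r α with hc
  have hsin1 : Real.sin α ≤ 1 := Real.sin_le_one α
  have hsin2 : -1 ≤ Real.sin α := Real.neg_one_le_sin α
  have h4Ru : (0:ℝ) ≤ 4 * R * u := by positivity
  have hc_lb : 4 * R ^ 2 ≤ c := by
    have hce : c = 8 * R ^ 2 + u ^ 2 + 4 * R * u * Real.sin α := rfl
    nlinarith [sq_nonneg (2 * R - u), mul_nonneg h4Ru (by linarith : (0:ℝ) ≤ 1 + Real.sin α)]
  have hc_ub : c ≤ 13 * R ^ 2 := by
    have hce : c = 8 * R ^ 2 + u ^ 2 + 4 * R * u * Real.sin α := rfl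
    nlinarith [mul_nonneg h4Ru (by linarith : (0:ℝ) ≤ 1 - Real.sin α),
      mul_le_mul huR huR hu0.le hR.le]
  have hc0 : 0 < c := lt_of_lt_of_le (by positivity) hc_lb
  have hcd : |c - 8 * R ^ 2| ≤ r * (r + 4 * R) := by
    have hce : c - 8 * R ^ 2 = u ^ 2 + 4 * R * u * Real.sin α := by
      simp [hc, cmg, hu]; ring
    rw [abs_le]
    constructor
    · nlinarith [mul_nonneg h4Ru (by linarith : (0:ℝ) ≤ 1 + Real.sin α),
        mul_le_mul hur hur hu0.le hr.le, sq_nonneg u,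
        mul_le_mul_of_nonneg_left hur (by positivity : (0:ℝ) ≤ 4 * R)]
    · nlinarith [mul_nonneg h4Ru (by linarith : (0:ℝ) ≤ 1 - Real.sin α),
        mul_le_mul hur hur hu0.le hr.le,
        mul_le_mul_of_nonneg_left hur (by positivity : (0:ℝ) ≤ 4 * R)]
  set G := r ^ 2 * h - Γ / (8 * π) * (r ^ 2 * Real.log (2 * R ^ 2 * r ^ 2)) + Γ / (4 * π) +
    Γ / (8 * π) * (r ^ 2 * Real.log c) with hGdef
  have hEhat : Ehat R Γ h r α = c ^ 2 / (8 * R ^ 2) * G := by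
    have hlog : Real.log (2 * R ^ 2 * r ^ 2 * Real.exp (-2 / r ^ 2)) =
        Real.log (2 * R ^ 2 * r ^ 2) + (-2 / r ^ 2) := by
      rw [Real.log_mul (by positivity) (Real.exp_ne_zero _), Real.log_exp]
    have hr2 : (r:ℝ) ^ 2 ≠ 0 := by positivity
    have e : r ^ 2 * (2 / r ^ 2) = 2 := by field_simp
    have hG2 : r ^ 2 * (h - Γ / (8 * π) * (Real.log (2 * R ^ 2 * r ^ 2) + -2 / r ^ 2) +
        Γ / (8 * π) * Real.log c) = G := by
      rw [hGdef]
      linear_combination (Γ / (8 * π)) * e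
    have hd : r ^ 2 / (8 * R ^ 2 / c ^ 2) = c ^ 2 / (8 * R ^ 2) * r ^ 2 := by
      rw [div_div_eq_mul_div, div_mul_eq_mul_div, mul_comm]
    rw [Ehat, lmg, hlog, hd, mul_assoc, hG2]
  set K := |Real.log (4 * R ^ 2)| + |Real.log (13 * R ^ 2)| with hK
  have hlogc : |Real.log c| ≤ K := by
    have h1 : Real.log c ≤ Real.log (13 * R ^ 2) := Real.log_le_log hc0 hc_ub
    have h2 : Real.log (4 * R ^ 2) ≤ Real.log c := Real.log_le_log (by positivity) hc_lb
    rw [abs_le]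
    constructor
    · calc -K ≤ -|Real.log (4 * R ^ 2)| := by
            simp [hK]
        _ ≤ Real.log (4 * R ^ 2) := neg_abs_le _
        _ ≤ Real.log c := h2
    · calc Real.log c ≤ Real.log (13 * R ^ 2) := h1
        _ ≤ |Real.log (13 * R ^ 2)| := le_abs_self _
        _ ≤ K := by simp [hK]
  have hG : |G - Γ / (4 * π)| ≤ Dfun R Γ h r := by
    have he : G - Γ / (4 * π) = r ^ 2 * h +
        (-(Γ / (8 * π)) * (r ^ 2 * Real.log (2 * R ^ 2 * r ^ 2))) +
        Γ / (8 * π) * (r ^ 2 * Real.log c) := by rw [hGdef]; ring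
    rw [he]
    refine (abs_add_three _ _ _).trans ?_
    have e1 : |r ^ 2 * h| = r ^ 2 * |h| := by
      rw [abs_mul, abs_of_nonneg (by positivity : (0:ℝ) ≤ r ^ 2)]
    have e2 : |(-(Γ / (8 * π))) * (r ^ 2 * Real.log (2 * R ^ 2 * r ^ 2))| =
        Γ / (8 * π) * |r ^ 2 * Real.log (2 * R ^ 2 * r ^ 2)| := by
      rw [abs_mul, abs_neg, abs_of_nonneg (by positivity : (0:ℝ) ≤ Γ / (8 * π))]
    have e3 : |Γ / (8 * π) * (r ^ 2 * Real.log c)| ≤ Γ / (8 * π) * (r ^ 2 * K) := by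
      rw [abs_mul, abs_of_nonneg (by positivity : (0:ℝ) ≤ Γ / (8 * π)), abs_mul,
        abs_of_nonneg (by positivity : (0:ℝ) ≤ r ^ 2)]
      gcongr
    rw [Dfun, e1, e2]
    linarith
  have hG' : |G| ≤ Γ / (4 * π) + Dfun R Γ h r := by
    calc |G| = |(G - Γ / (4 * π)) + Γ / (4 * π)| := by ring_nf
      _ ≤ |G - Γ / (4 * π)| + |Γ / (4 * π)| := abs_add_le _ _
      _ ≤ Dfun R Γ h r + Γ / (4 * π) := by
          rw [abs_of_nonneg (by positivity : (0:ℝ) ≤ Γ / (4 * π))]; linarith [hG]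
      _ = Γ / (4 * π) + Dfun R Γ h r := by ring
  have hcc : |c ^ 2 / (8 * R ^ 2) - 8 * R ^ 2| ≤ 21 / 8 * r * (r + 4 * R) := by
    have he : c ^ 2 / (8 * R ^ 2) - 8 * R ^ 2 =
        (c - 8 * R ^ 2) * ((c + 8 * R ^ 2) / (8 * R ^ 2)) := by
      field_simp
      ring
    rw [he, abs_mul]
    have h2 : |(c + 8 * R ^ 2) / (8 * R ^ 2)| ≤ 21 / 8 := by
      rw [abs_of_nonneg (by positivity : (0:ℝ) ≤ (c + 8 * R ^ 2) / (8 * R ^ 2))]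
      rw [div_le_iff₀ (by positivity)]
      nlinarith
    calc |c - 8 * R ^ 2| * |(c + 8 * R ^ 2) / (8 * R ^ 2)| ≤
        (r * (r + 4 * R)) * (21 / 8) :=
          mul_le_mul hcd h2 (abs_nonneg _) (by positivity)
      _ = 21 / 8 * r * (r + 4 * R) := by ring
  have hsplit : Ehat R Γ h r α - 2 * Γ * R ^ 2 / π =
      (c ^ 2 / (8 * R ^ 2) - 8 * R ^ 2) * G + 8 * R ^ 2 * (G - Γ / (4 * π)) := by
    rw [hEhat]
    have h2 : 2 * Γ * R ^ 2 / π = 8 * R ^ 2 * (Γ / (4 * π)) := by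
      field_simp; ring
    rw [h2]; ring
  rw [hsplit]
  calc |(c ^ 2 / (8 * R ^ 2) - 8 * R ^ 2) * G + 8 * R ^ 2 * (G - Γ / (4 * π))|
      ≤ |(c ^ 2 / (8 * R ^ 2) - 8 * R ^ 2) * G| + |8 * R ^ 2 * (G - Γ / (4 * π))| := abs_add_le _ _
    _ ≤ 21 / 8 * r * (r + 4 * R) * (Γ / (4 * π) + Dfun R Γ h r) + 8 * R ^ 2 * Dfun R Γ h r := by
        rw [abs_mul, abs_mul, abs_of_nonneg (by positivity : (0:ℝ) ≤ 8 * R ^ 2)]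
        have := mul_le_mul hcc hG' (abs_nonneg _) (by positivity)
        have h8 : 8 * R ^ 2 * |G - Γ / (4 * π)| ≤ 8 * R ^ 2 * Dfun R Γ h r := by
          gcongr
        linarith

/-- for every fixed energy level `h`, `Ê(h,r,α) → 2ΓR²/π` as `r → 0⁺`,
uniformly with respect to `α`; in particular the limit does not depend on `h`, so the
total collision manifold is the same boundary for every energy level. -/
theorem Ehat_uniform_limit_at_collision (R Γ : ℝ) (hR : 0 < R) (hΓ : 0 < Γ) :
    ∀ h : ℝ, ∀ ε > (0 : ℝ), ∃ δ > (0 : ℝ), ∀ r : ℝ, 0 < r → r < δ → ∀ α : ℝ,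
      |Ehat R Γ h r α - 2 * Γ * R ^ 2 / π| < ε := by
  intro h ε hε
  have hπ : (0:ℝ) < π := Real.pi_pos
  set f : ℝ → ℝ := fun r =>
    21 / 8 * r * (r + 4 * R) * (Γ / (4 * π) + Dfun R Γ h r) + 8 * R ^ 2 * Dfun R Γ h r with hf
  have hD := tendsto_Dfun R Γ h hR
  have htid : Tendsto (fun r : ℝ => r) (𝓝[>] (0:ℝ)) (𝓝 0) :=
    tendsto_id.mono_right nhdsWithin_le_nhds
  have hA : Tendsto (fun r : ℝ => 21 / 8 * r * (r + 4 * R)) (𝓝[>] (0:ℝ)) (𝓝 0) := by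
    have := (htid.const_mul (21 / 8 : ℝ)).mul (htid.add_const (4 * R))
    simpa using this
  have hf0 : Tendsto f (𝓝[>] (0:ℝ)) (𝓝 0) := by
    have hc0 : Tendsto (fun _ : ℝ => Γ / (4 * π)) (𝓝[>] (0:ℝ)) (𝓝 (Γ / (4 * π))) :=
      tendsto_const_nhds
    have := (hA.mul (hc0.add hD)).add (hD.const_mul (8 * R ^ 2))
    simpa only [hf, zero_mul, mul_zero, add_zero, zero_add] using this
  have hev : ∀ᶠ r in 𝓝[>] (0:ℝ), f r < ε := hf0.eventually_lt_const hε
  obtain ⟨δ₀, hδ₀, hball⟩ := Metric.mem_nhdsWithin_iff.1 hev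
  refine ⟨min δ₀ R, lt_min hδ₀ hR, ?_⟩
  intro r hr0 hrδ α
  have hrR : r ≤ R := le_of_lt (lt_of_lt_of_le hrδ (min_le_right _ _))
  have hrδ0 : r < δ₀ := lt_of_lt_of_le hrδ (min_le_left _ _)
  have hmem : r ∈ Metric.ball (0:ℝ) δ₀ ∩ Set.Ioi 0 := by
    constructor
    · simp only [Metric.mem_ball, Real.dist_eq, sub_zero, abs_of_pos hr0]
      exact hrδ0
    · exact hr0
  have hfε : f r < ε := hball hmem
  exact lt_of_le_of_lt (key R Γ h hR hΓ r hr0 hrR α) hfε
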